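/- Let W be a finite real reflection group acting on a Euclidean space V, which is the Weyl group of a root system Φ ⊂ V. Then the sign representation w ↦ det(w) of W occurs with multiplicity one in the symmetric power S^N(V*) where N = |Φ|/2, and with multiplicity zero in S^j(V*) for all 0 ≤ j < N. -/

import Mathlib

/-!
STATEMENT 4: Let `W` be the Weyl group of a root system `Φ` spanning the Euclidean
space `V = ι → ℝ` (inner product `BF`), acting on polynomial functions on `V`
(the symmetric algebra `S(V*)`, modelled as `MvPolynomial ι ℝ`, with
`(w • p)(x) = p(w⁻¹ x)`).  Then the sign representation `w ↦ det w` occurs with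
multiplicity one in `S^N(V*)` for `N = |Φ|/2`, and with multiplicity zero in
`S^j(V*)` for all `j < N`.
-/

noncomputable section

namespace Stmt4

variable {ι : Type*} [Fintype ι] [DecidableEq ι]

open MvPolynomial

/-- Substitution by a linear map: `substL f p` represents `p ∘ f`. -/
def substL (f : (ι → ℝ) →ₗ[ℝ] (ι → ℝ)) :
    MvPolynomial ι ℝ →ₐ[ℝ] MvPolynomial ι ℝ :=
  MvPolynomial.aeval (fun i => ∑ j, (f (Pi.single j 1) i) • MvPolynomial.X j)

/-- The action of a linear automorphism `w` on polynomials: `(w • p)(x) = p (w⁻¹ x)`. -/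
def polyAct (w : (ι → ℝ) ≃ₗ[ℝ] (ι → ℝ)) :
    MvPolynomial ι ℝ →ₐ[ℝ] MvPolynomial ι ℝ :=
  substL w.symm.toLinearMap

lemma apply_eq_sum (f : (ι → ℝ) →ₗ[ℝ] (ι → ℝ)) (x : ι → ℝ) :
    f x = ∑ j, x j • f (Pi.single j 1) := by
  have : x = ∑ j, x j • (Pi.single j 1 : ι → ℝ) := by
    funext k
    simp [Finset.sum_apply, Pi.single_apply]
  conv_lhs => rw [this]
  simp

theorem eval_substL (f : (ι → ℝ) →ₗ[ℝ] (ι → ℝ)) (x : ι → ℝ) (p : MvPolynomial ι ℝ) :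
    eval x (substL f p) = eval (f x) p := by
  induction p using MvPolynomial.induction_on with
  | C a => simp [substL]
  | add p q hp hq => simp [map_add, hp, hq]
  | mul_X p i hp =>
      simp only [map_mul, eval_mul, hp, substL, aeval_X, eval_X]
      congr 1
      rw [apply_eq_sum f x]
      simp [Finset.sum_apply, mul_comm]

theorem eval_polyAct (w : (ι → ℝ) ≃ₗ[ℝ] (ι → ℝ)) (x : ι → ℝ) (p : MvPolynomial ι ℝ) :
    eval x (polyAct w p) = eval (w.symm x) p :=
  eval_substL _ _ _

theorem polyAct_mul (w₁ w₂ : (ι → ℝ) ≃ₗ[ℝ] (ι → ℝ)) (p : MvPolynomial ι ℝ) :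
    polyAct (w₁ * w₂) p = polyAct w₁ (polyAct w₂ p) := by
  apply MvPolynomial.funext
  intro x
  simp only [eval_polyAct]
  rfl

theorem polyAct_one (p : MvPolynomial ι ℝ) : polyAct (1 : (ι → ℝ) ≃ₗ[ℝ] (ι → ℝ)) p = p := by
  apply MvPolynomial.funext
  intro x
  simp only [eval_polyAct]
  rfl


lemma X_dvd_sub_aeval (i : ι) (q : MvPolynomial ι ℝ) :
    X i ∣ q - MvPolynomial.aeval (Function.update X i 0) q := by
  induction q using MvPolynomial.induction_on with
  | C a => simp
  | add p q hp hq =>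
      rw [map_add, add_sub_add_comm]
      exact dvd_add hp hq
  | mul_X p j hp =>
      rcases eq_or_ne j i with rfl | hij
      · rw [map_mul, aeval_X, Function.update_self, mul_zero, sub_zero]
        exact Dvd.intro_left p rfl
      · rw [map_mul, aeval_X, Function.update_of_ne hij, ← sub_mul]
        exact hp.mul_right _

/-- For a nonzero functional `F`, an automorphism `u` with `F (u x) = x i0`. -/
lemma exists_straighten (F : (ι → ℝ) →ₗ[ℝ] ℝ) (hF : F ≠ 0) :
    ∃ (u : (ι → ℝ) ≃ₗ[ℝ] (ι → ℝ)) (i0 : ι), ∀ x, F (u x) = x i0 := by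
  have hex : ∃ i0 : ι, F (Pi.single i0 1) ≠ 0 := by
    by_contra h
    push_neg at h
    apply hF
    apply LinearMap.ext
    intro x
    have hx : x = ∑ j, x j • (Pi.single j 1 : ι → ℝ) := by
      funext k; simp [Finset.sum_apply, Pi.single_apply]
    rw [hx]
    simp [h]
  obtain ⟨i0, hc⟩ := hex
  set c := F (Pi.single i0 1) with hcdef
  set v : ι → ℝ := c⁻¹ • (Pi.single i0 1 : ι → ℝ) with hv
  set U : (ι → ℝ) →ₗ[ℝ] (ι → ℝ) :=
    LinearMap.id + ((LinearMap.proj i0 : (ι → ℝ) →ₗ[ℝ] ℝ) - F).smulRight v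
    with hU
  have hUapp : ∀ x, U x = x + (x i0 - F x) • v := fun x => rfl
  have hFU : ∀ x, F (U x) = x i0 := by
    intro x
    rw [hUapp, map_add, map_smul, hv, map_smul, smul_eq_mul, smul_eq_mul, ← hcdef]
    field_simp
    ring
  have hinj : Function.Injective U := by
    intro x y hxy
    have h1 : x i0 = y i0 := by rw [← hFU x, ← hFU y, hxy]
    funext k
    rcases eq_or_ne k i0 with rfl | hk
    · exact h1
    · have h2 := congrFun hxy k
      have hvk : v k = 0 := by simp [hv, Pi.single_apply, hk]
      simpa [hUapp, Pi.add_apply, Pi.smul_apply, hvk] using h2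
  refine ⟨LinearEquiv.ofInjectiveEndo U hinj, i0, fun x => ?_⟩
  rw [LinearEquiv.coe_ofInjectiveEndo]
  exact hFU x



lemma eval_aeval' (g : ι → MvPolynomial ι ℝ) (x : ι → ℝ) (q : MvPolynomial ι ℝ) :
    eval x (MvPolynomial.aeval g q) = eval (fun i => eval x (g i)) q := by
  induction q using MvPolynomial.induction_on with
  | C a => simp
  | add p q hp hq => simp only [map_add, hp, hq]
  | mul_X p i hp => simp only [map_mul, hp, aeval_X, eval_X]

lemma eval_substL_apply (f : (ι → ℝ) →ₗ[ℝ] (ι → ℝ)) (x : ι → ℝ) (p : MvPolynomial ι ℝ) :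
    eval x (substL f p) = eval (f x) p := eval_substL f x p

theorem dvd_iff_vanish (F : (ι → ℝ) →ₗ[ℝ] ℝ) (L : MvPolynomial ι ℝ)
    (hF : F ≠ 0) (hL : ∀ x, eval x L = F x) (p : MvPolynomial ι ℝ) :
    L ∣ p ↔ ∀ x, F x = 0 → eval x p = 0 := by
  obtain ⟨u, i0, hu⟩ := exists_straighten F hF
  constructor
  · rintro ⟨t, rfl⟩ x hx
    rw [eval_mul, hL, hx, zero_mul]
  · intro hvan
    set p' := substL u.toLinearMap p with hp'
    have hr : MvPolynomial.aeval (Function.update X i0 (0 : MvPolynomial ι ℝ)) p' = 0 := by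
      apply MvPolynomial.funext
      intro x
      rw [eval_aeval', map_zero]
      have hpt : (fun i => eval x ((Function.update X i0 (0 : MvPolynomial ι ℝ)) i)) = Function.update x i0 0 := by
        funext i
        rcases eq_or_ne i i0 with rfl | hi
        · simp
        · simp [Function.update_of_ne hi]
      rw [hpt, hp', eval_substL_apply]
      have h := hu (Function.update x i0 0)
      simp only [Function.update_self] at h
      exact hvan _ h
    have hdvd' : X i0 ∣ p' := by
      have := X_dvd_sub_aeval i0 p'
      rwa [hr, sub_zero] at this
    -- transport back
    have hback : substL u.symm.toLinearMap p' = p := by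
      apply MvPolynomial.funext
      intro x
      rw [eval_substL_apply, hp', eval_substL_apply]
      simp
    have hLX : substL u.symm.toLinearMap (X i0) = L := by
      apply MvPolynomial.funext
      intro x
      rw [eval_substL_apply, hL, eval_X]
      have := hu (u.symm x)
      simpa using this.symm
    rw [← hback, ← hLX]
    exact map_dvd _ hdvd'

theorem prime_of_linear (F : (ι → ℝ) →ₗ[ℝ] ℝ) (L : MvPolynomial ι ℝ)
    (hF : F ≠ 0) (hL : ∀ x, eval x L = F x) : Prime L := by
  obtain ⟨u, i0, hu⟩ := exists_straighten F hF
  -- the "restriction" map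
  set r : MvPolynomial ι ℝ →ₐ[ℝ] MvPolynomial ι ℝ :=
    (MvPolynomial.aeval (Function.update X i0 (0 : MvPolynomial ι ℝ))).comp (substL u.toLinearMap) with hrdef
  have hreval : ∀ (q : MvPolynomial ι ℝ) (x : ι → ℝ),
      eval x (r q) = eval (u (Function.update x i0 0)) q := by
    intro q x
    rw [hrdef, AlgHom.comp_apply, eval_aeval']
    have hpt : (fun i => eval x ((Function.update X i0 (0 : MvPolynomial ι ℝ)) i)) = Function.update x i0 0 := by
      funext i
      rcases eq_or_ne i i0 with rfl | hi
      · simp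
      · simp [Function.update_of_ne hi]
    rw [hpt, eval_substL_apply]
    rfl
  have hkey : ∀ q : MvPolynomial ι ℝ, L ∣ q ↔ r q = 0 := by
    intro q
    rw [dvd_iff_vanish F L hF hL]
    constructor
    · intro hvan
      apply MvPolynomial.funext
      intro x
      rw [hreval, map_zero]
      apply hvan
      rw [hu]
      simp
    · intro hr x hx
      have hx0 : Function.update (u.symm x) i0 0 = u.symm x := by
        funext k
        rcases eq_or_ne k i0 with rfl | hk
        · rw [Function.update_self]
          have := hu (u.symm x)
          simp at this
          rw [← this, hx]
        · rw [Function.update_of_ne hk]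
      have := congrArg (eval (u.symm x)) hr
      rw [hreval, map_zero, hx0] at this
      simpa using this
  constructor
  · intro h0
    have h1 : F ≠ 0 := hF
    obtain ⟨v, hv⟩ : ∃ v, F v ≠ 0 := by
      by_contra h
      push_neg at h
      exact hF (LinearMap.ext fun x => h x)
    apply hv
    rw [← hL, h0, map_zero]
  constructor
  · intro hunit
    have h1 : L ∣ 1 := hunit.dvd
    obtain ⟨t, ht⟩ := h1
    have := congrArg (eval (0 : ι → ℝ)) ht
    rw [map_one, eval_mul, hL, map_zero, zero_mul] at this
    exact one_ne_zero this
  · intro a b hab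
    rw [hkey] at hab ⊢
    rw [hkey b]
    rw [map_mul] at hab
    exact mul_eq_zero.mp hab


section Roots

variable (BF : (ι → ℝ) →ₗ[ℝ] (ι → ℝ) →ₗ[ℝ] ℝ)

/-- The linear polynomial `x ↦ BF x α`. -/
def lf (α : ι → ℝ) : MvPolynomial ι ℝ :=
  ∑ i, MvPolynomial.C (BF (Pi.single i 1) α) * X i

lemma eval_lf (α x : ι → ℝ) : eval x (lf BF α) = BF x α := by
  rw [lf]
  rw [map_sum]
  simp only [eval_mul, eval_C, eval_X]
  have hx : x = ∑ j, x j • (Pi.single j 1 : ι → ℝ) := by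
    funext k; simp [Finset.sum_apply, Pi.single_apply]
  conv_rhs => rw [hx]
  rw [map_sum]
  simp [mul_comm]

lemma lf_neg (α : ι → ℝ) : lf BF (-α) = - lf BF α := by
  simp only [lf, map_neg, neg_mul, ← Finset.sum_neg_distrib]

lemma lf_isHomogeneous (α : ι → ℝ) : (lf BF α).IsHomogeneous 1 := by
  apply MvPolynomial.IsHomogeneous.sum
  intro i _
  simpa using (MvPolynomial.isHomogeneous_X ℝ i).C_mul (BF (Pi.single i 1) α)

lemma lf_ne_zero (hpos : ∀ x : ι → ℝ, x ≠ 0 → 0 < BF x x)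
    {α : ι → ℝ} (hα : α ≠ 0) : lf BF α ≠ 0 := by
  intro h
  have := eval_lf BF α α
  rw [h, map_zero] at this
  exact (hpos α hα).ne' this.symm

lemma flip_ne_zero (hpos : ∀ x : ι → ℝ, x ≠ 0 → 0 < BF x x)
    {α : ι → ℝ} (hα : α ≠ 0) : BF.flip α ≠ 0 := by
  intro h
  have : BF α α = 0 := by
    have := congrFun (congrArg DFunLike.coe h) α
    simpa using this
  exact (hpos α hα).ne' this

lemma prime_lf (hpos : ∀ x : ι → ℝ, x ≠ 0 → 0 < BF x x)
    {α : ι → ℝ} (hα : α ≠ 0) : Prime (lf BF α) := by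
  apply prime_of_linear (BF.flip α) _ (flip_ne_zero BF hpos hα)
  intro x
  rw [eval_lf]
  rfl

lemma dvd_lf_iff (hpos : ∀ x : ι → ℝ, x ≠ 0 → 0 < BF x x)
    {α : ι → ℝ} (hα : α ≠ 0) (p : MvPolynomial ι ℝ) :
    lf BF α ∣ p ↔ ∀ x, BF x α = 0 → eval x p = 0 := by
  rw [dvd_iff_vanish (BF.flip α) _ (flip_ne_zero BF hpos hα)]
  · rfl
  · intro x
    rw [eval_lf]
    rfl

end Roots

section Refl

variable (BF : (ι → ℝ) →ₗ[ℝ] (ι → ℝ) →ₗ[ℝ] ℝ)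

def reflMap (α : ι → ℝ) : (ι → ℝ) →ₗ[ℝ] (ι → ℝ) :=
  LinearMap.id - ((2 * (BF α α)⁻¹) • (BF.flip α)).smulRight α

lemma reflMap_apply (α x : ι → ℝ) :
    reflMap BF α x = x - (2 * BF x α / BF α α) • α := by
  show x - ((2 * (BF α α)⁻¹ * BF x α)) • α = _
  congr 1
  ring_nf

lemma BF_reflMap (α : ι → ℝ) (hD : BF α α ≠ 0) (x : ι → ℝ) :
    BF (reflMap BF α x) α = - BF x α := by
  rw [reflMap_apply, map_sub, map_smul]
  simp only [LinearMap.sub_apply, LinearMap.smul_apply, smul_eq_mul]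
  field_simp
  ring

lemma reflMap_reflMap (α : ι → ℝ) (hD : BF α α ≠ 0) (x : ι → ℝ) :
    reflMap BF α (reflMap BF α x) = x := by
  rw [reflMap_apply BF α (reflMap BF α x), BF_reflMap BF α hD, reflMap_apply]
  have h : 2 * (- BF x α) / BF α α = -(2 * BF x α / BF α α) := by ring
  rw [h, neg_smul, sub_neg_eq_add, sub_add_cancel]

def reflEquiv (α : ι → ℝ) (hD : BF α α ≠ 0) : (ι → ℝ) ≃ₗ[ℝ] (ι → ℝ) :=
  LinearEquiv.ofLinear (reflMap BF α) (reflMap BF α)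
    (LinearMap.ext (reflMap_reflMap BF α hD)) (LinearMap.ext (reflMap_reflMap BF α hD))

lemma reflEquiv_apply (α : ι → ℝ) (hD : BF α α ≠ 0) (x : ι → ℝ) :
    reflEquiv BF α hD x = x - (2 * BF x α / BF α α) • α := reflMap_apply BF α x

lemma reflEquiv_symm_apply (α : ι → ℝ) (hD : BF α α ≠ 0) (x : ι → ℝ) :
    (reflEquiv BF α hD).symm x = x - (2 * BF x α / BF α α) • α := reflMap_apply BF α x

lemma reflEquiv_fix (α : ι → ℝ) (hD : BF α α ≠ 0) (x : ι → ℝ) (hx : BF x α = 0) :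
    reflEquiv BF α hD x = x := by
  rw [reflEquiv_apply, hx]
  simp

lemma BF_apply_sum (x y : ι → ℝ) : BF x y = ∑ j, x j * BF (Pi.single j 1) y := by
  have hx : x = ∑ j, x j • (Pi.single j 1 : ι → ℝ) := by
    funext k; simp [Finset.sum_apply, Pi.single_apply]
  conv_lhs => rw [hx]
  rw [map_sum]
  simp [LinearMap.sum_apply]

lemma reflEquiv_root (α : ι → ℝ) (hD : BF α α ≠ 0) :
    reflEquiv BF α hD α = - α := by
  rw [reflEquiv_apply]
  have h2 : 2 * BF α α / BF α α = 2 := by field_simp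
  rw [h2, two_smul]
  abel

lemma reflMap_BF (α : ι → ℝ) (hD : BF α α ≠ 0) (hsym : ∀ x y, BF x y = BF y x)
    (x y : ι → ℝ) : BF (reflMap BF α x) (reflMap BF α y) = BF x y := by
  rw [reflMap_apply, reflMap_apply]
  simp only [map_sub, map_smul, LinearMap.sub_apply, LinearMap.smul_apply, smul_eq_mul]
  rw [hsym α y]
  field_simp
  ring

lemma det_reflMap (α : ι → ℝ) (hD : BF α α ≠ 0) :
    LinearMap.det (reflMap BF α) = -1 := by
  classical
  have hBα : ∑ j, BF (Pi.single j 1) α * α j = BF α α := by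
    rw [BF_apply_sum BF α α]
    exact Finset.sum_congr rfl fun j _ => by ring
  rw [← LinearMap.det_toMatrix (Pi.basisFun ℝ ι)]
  have hM : LinearMap.toMatrix (Pi.basisFun ℝ ι) (Pi.basisFun ℝ ι) (reflMap BF α)
      = 1 + Matrix.replicateCol Unit (-α) * Matrix.replicateRow Unit
          (fun j => 2 * (BF α α)⁻¹ * BF (Pi.single j 1) α) := by
    ext i j
    rw [LinearMap.toMatrix_apply]
    rw [reflMap_apply]
    simp only [Pi.basisFun_apply, Pi.basisFun_repr, Matrix.add_apply, Matrix.one_apply,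
      Matrix.mul_apply, Matrix.replicateCol_apply, Matrix.replicateRow_apply, Finset.univ_unique,
      Finset.sum_singleton, Pi.sub_apply, Pi.smul_apply, smul_eq_mul, Pi.neg_apply,
      Pi.single_apply]
    rcases eq_or_ne i j with rfl | hij
    · simp
      ring
    · simp [hij, Ne.symm hij]
      ring
  rw [hM, Matrix.det_one_add_replicateCol_mul_replicateRow]
  have : dotProduct (fun j => 2 * (BF α α)⁻¹ * BF (Pi.single j 1) α) (-α)
      = - (2 * (BF α α)⁻¹ * BF α α) := by
    rw [dotProduct]
    rw [← hBα]
    rw [Finset.mul_sum, ← Finset.sum_neg_distrib]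
    exact Finset.sum_congr rfl fun j _ => by simp; ring
  rw [this]
  field_simp
  norm_num

end Refl

/-- The sign-isotypic subspace of the degree-`d` homogeneous component: homogeneous
polynomials `p` of degree `d` with `w • p = det(w) • p` for all `w ∈ W`. -/
def signSpace (W : Subgroup ((ι → ℝ) ≃ₗ[ℝ] (ι → ℝ))) (d : ℕ) :
    Submodule ℝ (MvPolynomial ι ℝ) :=
  (MvPolynomial.homogeneousSubmodule ι ℝ d) ⊓
    ⨅ w ∈ W, LinearMap.ker
      ((polyAct w).toLinearMap - (LinearMap.det (w : (ι → ℝ) ≃ₗ[ℝ] (ι → ℝ)).toLinearMap) • LinearMap.id)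

lemma mem_signSpace {W : Subgroup ((ι → ℝ) ≃ₗ[ℝ] (ι → ℝ))} {d : ℕ} {p : MvPolynomial ι ℝ} :
    p ∈ signSpace W d ↔ p.IsHomogeneous d ∧
      ∀ w ∈ W, polyAct w p
        = (LinearMap.det ((w : (ι → ℝ) ≃ₗ[ℝ] (ι → ℝ))).toLinearMap) • p := by
  simp only [signSpace, Submodule.mem_inf, Submodule.mem_iInf, LinearMap.mem_ker,
    LinearMap.sub_apply, LinearMap.smul_apply, LinearMap.id_apply,
    AlgHom.toLinearMap_apply, sub_eq_zero, MvPolynomial.mem_homogeneousSubmodule]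

lemma prod_primes_dvd' (s : Finset (ι → ℝ)) (g : (ι → ℝ) → MvPolynomial ι ℝ)
    (hprime : ∀ a ∈ s, Prime (g a))
    (hnass : ∀ a ∈ s, ∀ b ∈ s, a ≠ b → ¬ (g a ∣ g b)) :
    ∀ p : MvPolynomial ι ℝ, (∀ a ∈ s, g a ∣ p) → (∏ a ∈ s, g a) ∣ p := by
  classical
  induction s using Finset.induction_on with
  | empty => intro p _; simpa using one_dvd p
  | @insert a s ha ih =>
      intro p hdvd
      obtain ⟨q, hq⟩ := hdvd a (Finset.mem_insert_self a s)
      have hsq : ∀ b ∈ s, g b ∣ q := by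
        intro b hb
        have hba : b ≠ a := fun h => ha (h ▸ hb)
        have h1 : g b ∣ g a * q := hq ▸ hdvd b (Finset.mem_insert_of_mem hb)
        rcases (hprime b (Finset.mem_insert_of_mem hb)).2.2 _ _ h1 with h2 | h2
        · exact absurd h2 (hnass b (Finset.mem_insert_of_mem hb) a
            (Finset.mem_insert_self a s) hba)
        · exact h2
      have := ih (fun b hb => hprime b (Finset.mem_insert_of_mem hb))
        (fun b hb c hc => hnass b (Finset.mem_insert_of_mem hb) c (Finset.mem_insert_of_mem hc))
        q hsq
      rw [Finset.prod_insert ha, hq]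
      exact mul_dvd_mul_left (g a) this

lemma homog_quot_component {A p q : MvPolynomial ι ℝ} {N j : ℕ}
    (hA : A.IsHomogeneous N) (hA0 : A ≠ 0) (hp : p.IsHomogeneous j) (hpq : p = A * q) :
    ∀ d : ℕ, N + d ≠ j → MvPolynomial.homogeneousComponent d q = 0 := by
  intro d hd
  by_cases hdle : d ≤ q.totalDegree
  · have h1 : MvPolynomial.homogeneousComponent (N + d) p = 0 := by
      rw [MvPolynomial.homogeneousComponent_of_mem
        ((MvPolynomial.mem_homogeneousSubmodule _ _).mpr hp), if_neg hd]
    have hq : q = ∑ i ∈ Finset.range (q.totalDegree + 1), MvPolynomial.homogeneousComponent i q :=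
      (MvPolynomial.sum_homogeneousComponent q).symm
    have h2 : MvPolynomial.homogeneousComponent (N + d) p
        = A * MvPolynomial.homogeneousComponent d q := by
      conv_lhs => rw [hpq, hq]
      rw [Finset.mul_sum, map_sum]
      rw [Finset.sum_eq_single_of_mem d (Finset.mem_range.mpr (by omega))]
      · rw [MvPolynomial.homogeneousComponent_of_mem
          ((MvPolynomial.mem_homogeneousSubmodule _ _).mpr
            (hA.mul (MvPolynomial.homogeneousComponent_isHomogeneous d q))), if_pos rfl]
      · intro b hbmem hbd
        rw [MvPolynomial.homogeneousComponent_of_mem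
          ((MvPolynomial.mem_homogeneousSubmodule _ _).mpr
            (hA.mul (MvPolynomial.homogeneousComponent_isHomogeneous b q)))]
        rw [if_neg]
        omega
    rw [h1] at h2
    rcases mul_eq_zero.mp h2.symm with h | h
    · exact absurd h hA0
    · exact h
  · have hlt : q.totalDegree < d := by omega
    exact MvPolynomial.homogeneousComponent_eq_zero d q hlt

lemma eq_zero_of_dvd_homog_lt {A p : MvPolynomial ι ℝ} {N j : ℕ}
    (hA : A.IsHomogeneous N) (hA0 : A ≠ 0) (hp : p.IsHomogeneous j) (hj : j < N)
    (hdvd : A ∣ p) : p = 0 := by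
  obtain ⟨q, hq⟩ := hdvd
  have hcomp := homog_quot_component hA hA0 hp hq
  have hq0 : q = 0 := by
    conv_lhs => rw [← MvPolynomial.sum_homogeneousComponent q]
    apply Finset.sum_eq_zero
    intro d _
    exact hcomp d (by omega)
  rw [hq, hq0, mul_zero]

lemma eq_smul_of_dvd_homog_eq {A p : MvPolynomial ι ℝ} {N : ℕ}
    (hA : A.IsHomogeneous N) (hA0 : A ≠ 0) (hp : p.IsHomogeneous N)
    (hdvd : A ∣ p) : ∃ c : ℝ, p = c • A := by
  obtain ⟨q, hq⟩ := hdvd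
  have hcomp := homog_quot_component hA hA0 hp hq
  have hq0 : q = MvPolynomial.C (MvPolynomial.coeff 0 q) := by
    conv_lhs => rw [← MvPolynomial.sum_homogeneousComponent q]
    rw [Finset.sum_eq_single_of_mem 0 (Finset.mem_range.mpr (by omega))]
    · exact MvPolynomial.homogeneousComponent_zero q
    · intro b _ hb0
      exact hcomp b (by omega)
  refine ⟨MvPolynomial.coeff 0 q, ?_⟩
  rw [hq, MvPolynomial.smul_eq_C_mul, mul_comm]
  rw [← hq0]

lemma lf_dvd_lf (BF : (ι → ℝ) →ₗ[ℝ] (ι → ℝ) →ₗ[ℝ] ℝ)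
    (hpos : ∀ x : ι → ℝ, x ≠ 0 → 0 < BF x x)
    {a b : ι → ℝ} (ha : a ≠ 0)
    (hdvd : lf BF a ∣ lf BF b) : ∃ c : ℝ, b = c • a := by
  have hvan : ∀ x, BF x a = 0 → BF x b = 0 := by
    intro x hx
    have := (dvd_lf_iff BF hpos ha (lf BF b)).mp hdvd x hx
    rwa [eval_lf] at this
  set c : ℝ := BF a b / BF a a with hc
  refine ⟨c, ?_⟩
  have hD : BF a a ≠ 0 := (hpos a ha).ne'
  have hall : ∀ x, BF x (b - c • a) = 0 := by
    intro x
    have hx : BF (x - (BF x a / BF a a) • a) a = 0 := by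
      rw [map_sub, map_smul, LinearMap.sub_apply, LinearMap.smul_apply, smul_eq_mul]
      field_simp
      ring
    have hb := hvan _ hx
    rw [map_sub, map_smul, LinearMap.sub_apply, LinearMap.smul_apply, smul_eq_mul] at hb
    rw [map_sub, map_smul, smul_eq_mul]
    rw [hc]
    have hsub : BF x b = BF x a / BF a a * BF a b := by linarith
    rw [hsub]
    field_simp
    ring
  by_contra hne
  have hz : b - c • a ≠ 0 := fun h => hne (by rw [sub_eq_zero] at h; exact h)
  have := hpos _ hz
  rw [hall (b - c • a)] at this
  exact lt_irrefl 0 this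

lemma exists_pos_half (Φ : Finset (ι → ℝ)) (h0 : (0 : ι → ℝ) ∉ Φ)
    (hneg : ∀ α ∈ Φ, -α ∈ Φ) :
    ∃ P : Finset (ι → ℝ), P ⊆ Φ ∧
      (∀ α ∈ Φ, (α ∈ P ∧ -α ∉ P) ∨ (-α ∈ P ∧ α ∉ P)) ∧ Φ.card = 2 * P.card := by
  classical
  set r : (ι → ℝ) → (ι → ℝ) → Prop := WellOrderingRel with hr
  have hwo : IsWellOrder (ι → ℝ) r := WellOrderingRel.isWellOrder
  have htri : ∀ a b : ι → ℝ, r a b ∨ a = b ∨ r b a := fun a b => trichotomous_of r a b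
  have hasymm : ∀ a b : ι → ℝ, r a b → r b a → False := fun a b h1 h2 =>
    (irrefl_of r a) (IsTrans.trans (r := r) a b a h1 h2)
  have hne : ∀ α ∈ Φ, α ≠ -α := by
    intro α hα h
    apply h0
    have hz : α = 0 := by
      funext k
      have h2 := congrFun h k
      simp only [Pi.neg_apply] at h2
      simp only [Pi.zero_apply]
      linarith
    rwa [hz] at hα
  refine ⟨Φ.filter (fun α => r α (-α)), Finset.filter_subset _ _, ?_, ?_⟩
  · intro α hα
    rcases htri α (-α) with h | h | h
    · left
      refine ⟨Finset.mem_filter.mpr ⟨hα, h⟩, fun hmem => ?_⟩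
      have h2 := (Finset.mem_filter.mp hmem).2
      rw [neg_neg] at h2
      exact hasymm _ _ h h2
    · exact absurd h (hne α hα)
    · right
      refine ⟨Finset.mem_filter.mpr ⟨hneg α hα, by rwa [neg_neg]⟩, fun hmem => ?_⟩
      exact hasymm _ _ (Finset.mem_filter.mp hmem).2 h
  · have hsplit := Finset.card_filter_add_card_filter_not
      (s := Φ) (p := fun α => r α (-α))
    have hbij : (Φ.filter (fun α => ¬ r α (-α))).card = (Φ.filter (fun α => r α (-α))).card := by
      apply Finset.card_bij (fun α _ => -α)
      · intro α hα
        obtain ⟨h1, h2⟩ := Finset.mem_filter.mp hα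
        refine Finset.mem_filter.mpr ⟨hneg α h1, ?_⟩
        rw [neg_neg]
        rcases htri α (-α) with h | h | h
        · exact absurd h h2
        · exact absurd h (hne α h1)
        · exact h
      · intro α hα β hβ hab
        have := congrArg Neg.neg hab
        simpa using this
      · intro β hβ
        obtain ⟨h1, h2⟩ := Finset.mem_filter.mp hβ
        refine ⟨-β, Finset.mem_filter.mpr ⟨hneg β h1, ?_⟩, by rw [neg_neg]⟩
        rw [neg_neg]
        intro hcon
        exact hasymm _ _ h2 hcon
    omega

theorem stmt4
    (Φ : Finset (ι → ℝ)) (h0 : (0 : ι → ℝ) ∉ Φ)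
    (hspan : Submodule.span ℝ (Φ : Set (ι → ℝ)) = ⊤)      -- V^W is trivial
    (hneg : ∀ α ∈ Φ, -α ∈ Φ)
    (hred : ∀ α ∈ Φ, ∀ c : ℝ, c • α ∈ Φ → c = 1 ∨ c = -1)  -- reduced
    (BF : (ι → ℝ) →ₗ[ℝ] (ι → ℝ) →ₗ[ℝ] ℝ)
    (hsym : ∀ x y, BF x y = BF y x)
    (hpos : ∀ x : ι → ℝ, x ≠ 0 → 0 < BF x x)               -- Euclidean structure
    (W : Subgroup ((ι → ℝ) ≃ₗ[ℝ] (ι → ℝ)))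
    (hWgen : W = Subgroup.closure
      {w | ∃ α ∈ Φ, ∀ x : ι → ℝ, w x = x - (2 * BF x α / BF α α) • α})
    (hWΦ : ∀ w ∈ W, ∀ α ∈ Φ, w α ∈ Φ) :
    Module.finrank ℝ (signSpace W (Φ.card / 2)) = 1 ∧
    ∀ j < Φ.card / 2, Module.finrank ℝ (signSpace W j) = 0 := by
  classical
  have hα0 : ∀ α ∈ Φ, α ≠ 0 := fun α hα h => h0 (h ▸ hα)
  have hD : ∀ α ∈ Φ, BF α α ≠ 0 := fun α hα => (hpos α (hα0 α hα)).ne'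
  obtain ⟨P, hPsub, hPpair, hPcard⟩ := exists_pos_half Φ h0 hneg
  set N := Φ.card / 2 with hNdef
  have hPN : P.card = N := by omega
  set J : MvPolynomial ι ℝ := ∏ α ∈ P, lf BF α with hJdef
  have hJhom : J.IsHomogeneous N := by
    rw [hJdef, ← hPN]
    have h := MvPolynomial.IsHomogeneous.prod P (fun β => lf BF β) (fun _ => 1)
      (fun β _ => lf_isHomogeneous BF β)
    simpa using h
  have hJ0 : J ≠ 0 := by
    rw [hJdef]
    exact Finset.prod_ne_zero_iff.mpr
      (fun α hα => lf_ne_zero BF hpos (hα0 α (hPsub hα)))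
  have hsmem : ∀ α (hα : α ∈ Φ), reflEquiv BF α (hD α hα) ∈ W := by
    intro α hα
    rw [hWgen]
    exact Subgroup.subset_closure ⟨α, hα, fun x => reflEquiv_apply BF α (hD α hα) x⟩
  have hsdet : ∀ α (hα : α ∈ Φ),
      LinearMap.det (reflEquiv BF α (hD α hα)).toLinearMap = -1 := by
    intro α hα
    exact det_reflMap BF α (hD α hα)
  -- W preserves BF
  have hWBF : ∀ w ∈ W, ∀ x y, BF (w x) (w y) = BF x y := by
    intro w hw
    rw [hWgen] at hw
    induction hw using Subgroup.closure_induction with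
    | mem w hw =>
        obtain ⟨α, hα, hform⟩ := hw
        intro x y
        have h := reflMap_BF BF α (hD α hα) hsym x y
        rw [reflMap_apply, reflMap_apply] at h
        rw [hform x, hform y]
        exact h
    | one => intro x y; rfl
    | mul a b ha hb hA hB => intro x y; exact (hA (b x) (b y)).trans (hB x y)
    | inv a ha hA =>
        intro x y
        have h := hA (a.symm x) (a.symm y)
        rw [a.apply_symm_apply, a.apply_symm_apply] at h
        exact h.symm
  -- vanishing of sign-equivariant polynomials, hence divisibility by J
  have hdiv : ∀ (d : ℕ) (p : MvPolynomial ι ℝ), p ∈ signSpace W d → J ∣ p := by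
    intro d p hp
    obtain ⟨hphom, hpw⟩ := mem_signSpace.mp hp
    have hvan : ∀ α ∈ Φ, ∀ x, BF x α = 0 → MvPolynomial.eval x p = 0 := by
      intro α hα x hx
      have h1 := hpw (reflEquiv BF α (hD α hα)) (hsmem α hα)
      rw [hsdet α hα] at h1
      have h2 := congrArg (MvPolynomial.eval x) h1
      rw [eval_polyAct] at h2
      have hfix : (reflEquiv BF α (hD α hα)).symm x = x := by
        show reflMap BF α x = x
        rw [reflMap_apply, hx]
        simp
      rw [hfix, MvPolynomial.smul_eq_C_mul, eval_mul, MvPolynomial.eval_C] at h2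
      linarith
    have hdvdα : ∀ α ∈ P, lf BF α ∣ p := fun α hα =>
      (dvd_lf_iff BF hpos (hα0 _ (hPsub hα)) p).mpr (hvan α (hPsub hα))
    rw [hJdef]
    apply prod_primes_dvd' P (fun a => lf BF a)
      (fun a ha => prime_lf BF hpos (hα0 a (hPsub ha)))
      ?_ p hdvdα
    intro a ha b hb hab hdvd
    obtain ⟨c, hc⟩ := lf_dvd_lf BF hpos (hα0 a (hPsub ha)) hdvd
    rcases hred a (hPsub ha) c (by rw [← hc]; exact hPsub hb) with h1 | h1
    · rw [h1, one_smul] at hc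
      exact hab hc.symm
    · rw [h1, neg_smul, one_smul] at hc
      rcases hPpair a (hPsub ha) with ⟨_, h2⟩ | ⟨_, h2⟩
      · exact h2 (hc ▸ hb)
      · exact h2 ha
  -- the key sign computation for reflections
  have hbase : ∀ α (hα : α ∈ Φ),
      polyAct (reflEquiv BF α (hD α hα)) J = (-1 : ℝ) • J := by
    intro α hα
    set s := reflEquiv BF α (hD α hα) with hsdef
    have hsW : s ∈ W := hsmem α hα
    have hss : ∀ x, s (s x) = x := fun x => reflMap_reflMap BF α (hD α hα) x
    have hssymm : ∀ x, s.symm x = s x := fun x => rfl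
    have hsneg : ∀ x, s (-x) = - s x := fun x => map_neg s x
    have hΦs : ∀ β ∈ Φ, s β ∈ Φ := fun β hβ => hWΦ s hsW β hβ
    have hsBF : ∀ x β, BF (s x) (s β) = BF x β := hWBF s hsW
    have hBFs : ∀ x β, BF (s x) β = BF x (s β) := by
      intro x β
      conv_lhs => rw [← hss β]
      rw [hsBF]
    set π : (ι → ℝ) → (ι → ℝ) := fun β => if s β ∈ P then s β else -(s β) with hπ
    set η : (ι → ℝ) → ℝ := fun β => if s β ∈ P then 1 else -1 with hη
    have hlfs : ∀ β, lf BF (s β) = η β • lf BF (π β) := by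
      intro β
      by_cases hmem : s β ∈ P
      · simp only [hπ, hη, if_pos hmem, one_smul]
      · simp only [hπ, hη, if_neg hmem, lf_neg, smul_neg, neg_smul, one_smul, neg_neg]
    have hπP : ∀ β ∈ P, π β ∈ P := by
      intro β hβ
      by_cases hmem : s β ∈ P
      · simp only [hπ, if_pos hmem]; exact hmem
      · simp only [hπ, if_neg hmem]
        rcases hPpair (s β) (hΦs β (hPsub hβ)) with ⟨h2, _⟩ | ⟨h2, _⟩
        · exact absurd h2 hmem
        · exact h2
    have hππ : ∀ β ∈ P, π (π β) = β := by
      intro β hβ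
      by_cases hmem : s β ∈ P
      · have h1 : π β = s β := by simp only [hπ, if_pos hmem]
        rw [h1]
        simp only [hπ]
        rw [hss β, if_pos hβ]
      · have h1 : π β = -(s β) := by simp only [hπ, if_neg hmem]
        rw [h1]
        have h2 : s (-(s β)) = -β := by rw [hsneg, hss]
        have h3 : -β ∉ P := by
          rcases hPpair β (hPsub hβ) with ⟨_, h4⟩ | ⟨h4, h5⟩
          · exact h4
          · exact absurd hβ h5
        simp only [hπ]
        rw [h2, if_neg h3, neg_neg]
    have hprod1 : polyAct s J = ∏ β ∈ P, lf BF (s β) := by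
      apply MvPolynomial.funext
      intro x
      rw [eval_polyAct, hssymm x, hJdef, map_prod, map_prod]
      apply Finset.prod_congr rfl
      intro β hβ
      rw [eval_lf, eval_lf, hBFs]
    have hbijprod : (∏ β ∈ P, lf BF (π β)) = J := by
      rw [hJdef]
      exact Finset.prod_bij' (fun β _ => π β) (fun β _ => π β)
        (fun β hβ => hπP β hβ) (fun β hβ => hπP β hβ)
        (fun β hβ => hππ β hβ) (fun β hβ => hππ β hβ)
        (fun β hβ => rfl)
    have hprod2 : (∏ β ∈ P, lf BF (s β)) = (∏ β ∈ P, η β) • J := by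
      calc (∏ β ∈ P, lf BF (s β))
          = ∏ β ∈ P, (MvPolynomial.C (η β) * lf BF (π β)) := by
            apply Finset.prod_congr rfl
            intro β hβ
            rw [hlfs β, MvPolynomial.smul_eq_C_mul]
        _ = (∏ β ∈ P, MvPolynomial.C (η β)) * ∏ β ∈ P, lf BF (π β) :=
            Finset.prod_mul_distrib
        _ = MvPolynomial.C (∏ β ∈ P, η β) * J := by rw [← map_prod, hbijprod]
        _ = (∏ β ∈ P, η β) • J := (MvPolynomial.smul_eq_C_mul J _).symm
    have hE : (∏ β ∈ P, η β) = 1 ∨ (∏ β ∈ P, η β) = -1 := by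
      refine Finset.prod_induction η (fun t => t = 1 ∨ t = -1) ?_ (Or.inl rfl) ?_
      · rintro a b (ha | ha) (hb | hb) <;> rw [ha, hb] <;> norm_num
      · intro β _
        by_cases h : s β ∈ P
        · left; simp only [hη, if_pos h]
        · right; simp only [hη, if_neg h]
    rcases hE with hE1 | hE1
    · exfalso
      have hsJ : polyAct s J = J := by rw [hprod1, hprod2, hE1, one_smul]
      set α' : ι → ℝ := if α ∈ P then α else -α with hα'def
      have hα'P : α' ∈ P := by
        rcases hPpair α hα with ⟨h1, _⟩ | ⟨h1, h2⟩
        · simp only [hα'def, if_pos h1]; exact h1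
        · simp only [hα'def, if_neg h2]; exact h1
      have hα'Φ : α' ∈ Φ := hPsub hα'P
      have hα'0 : α' ≠ 0 := hα0 _ hα'Φ
      have hsα' : s α' = -α' := by
        by_cases h : α ∈ P
        · simp only [hα'def, if_pos h]
          exact reflEquiv_root BF α (hD α hα)
        · simp only [hα'def, if_neg h]
          rw [hsneg]
          rw [show s α = -α from reflEquiv_root BF α (hD α hα), neg_neg]
      set K : MvPolynomial ι ℝ := ∏ β ∈ P.erase α', lf BF β with hKdef
      have hJK : J = lf BF α' * K := by
        rw [hJdef, hKdef]
        exact (Finset.mul_prod_erase P _ hα'P).symm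
      have hcanc : polyAct s K = - K := by
        have hzero : lf BF α' * (polyAct s K + K) = 0 := by
          apply MvPolynomial.funext
          intro x
          have h1 := congrArg (MvPolynomial.eval x) hsJ
          rw [eval_polyAct, hssymm x, hJK, eval_mul, eval_mul, eval_lf, eval_lf] at h1
          have h2 : BF (s x) α' = - BF x α' := by rw [hBFs, hsα', map_neg]
          rw [h2] at h1
          rw [eval_mul, eval_lf, map_add, eval_polyAct, hssymm x, map_zero]
          linear_combination -h1
        rcases mul_eq_zero.mp hzero with h | h
        · exact absurd h (lf_ne_zero BF hpos hα'0)
        · exact eq_neg_of_add_eq_zero_left h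
      have hKvan : ∀ x, BF x α' = 0 → MvPolynomial.eval x K = 0 := by
        intro x hx
        have hxα : BF x α = 0 := by
          by_cases h : α ∈ P
          · rw [hα'def] at hx
            rw [if_pos h] at hx
            exact hx
          · rw [hα'def] at hx
            rw [if_neg h, map_neg] at hx
            linarith
        have hfix : s x = x := reflEquiv_fix BF α (hD α hα) x hxα
        have h1 := congrArg (MvPolynomial.eval x) hcanc
        rw [eval_polyAct, hssymm x, hfix, map_neg] at h1
        linarith
      have hdvdK : lf BF α' ∣ K := (dvd_lf_iff BF hpos hα'0 K).mpr hKvan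
      rw [hKdef] at hdvdK
      obtain ⟨β, hβmem, hβdvd⟩ :=
        (prime_lf BF hpos hα'0).exists_mem_finset_dvd hdvdK
      obtain ⟨c, hc⟩ := lf_dvd_lf BF hpos hα'0 hβdvd
      have hβP : β ∈ P := Finset.mem_of_mem_erase hβmem
      rcases hred α' hα'Φ c (by rw [← hc]; exact hPsub hβP) with h1 | h1
      · rw [h1, one_smul] at hc
        exact (Finset.mem_erase.mp hβmem).1 hc
      · rw [h1, neg_smul, one_smul] at hc
        rcases hPpair α' hα'Φ with ⟨_, h2⟩ | ⟨_, h2⟩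
        · exact h2 (hc ▸ hβP)
        · exact h2 hα'P
    · rw [hprod1, hprod2, hE1]
  -- equivariance of J for the whole group
  have hJsign : ∀ w ∈ W,
      polyAct w J = (LinearMap.det (w : (ι → ℝ) ≃ₗ[ℝ] (ι → ℝ)).toLinearMap) • J := by
    have main : ∀ w ∈ W, polyAct w J = (LinearMap.det w.toLinearMap) • J ∧
        LinearMap.det w.toLinearMap * LinearMap.det w.toLinearMap = 1 := by
      intro w hw
      rw [hWgen] at hw
      induction hw using Subgroup.closure_induction with
      | mem w hw =>
          obtain ⟨α, hα, hform⟩ := hw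
          have hw' : w = reflEquiv BF α (hD α hα) :=
            LinearEquiv.ext (fun x => by rw [hform x, reflEquiv_apply])
          rw [hw', hsdet α hα]
          refine ⟨?_, by norm_num⟩
          rw [hbase α hα]
      | one =>
          have hid : (1 : (ι → ℝ) ≃ₗ[ℝ] (ι → ℝ)).toLinearMap = LinearMap.id := rfl
          rw [polyAct_one, hid, LinearMap.det_id]
          exact ⟨(one_smul ℝ J).symm, by norm_num⟩
      | mul a b ha hb hA hB =>
          have hdet : LinearMap.det (a * b).toLinearMap
              = LinearMap.det a.toLinearMap * LinearMap.det b.toLinearMap := by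
            rw [show (a * b).toLinearMap = a.toLinearMap * b.toLinearMap from rfl, map_mul]
          constructor
          · rw [polyAct_mul, hB.1, map_smul, hA.1, hdet, smul_smul, mul_comm]
          · rw [hdet]
            calc (LinearMap.det a.toLinearMap * LinearMap.det b.toLinearMap) *
                  (LinearMap.det a.toLinearMap * LinearMap.det b.toLinearMap)
                = (LinearMap.det a.toLinearMap * LinearMap.det a.toLinearMap) *
                  (LinearMap.det b.toLinearMap * LinearMap.det b.toLinearMap) := by ring
              _ = 1 := by rw [hA.2, hB.2, mul_one]
      | inv a ha hA =>
          have hdetinv : LinearMap.det (a⁻¹ : (ι → ℝ) ≃ₗ[ℝ] (ι → ℝ)).toLinearMap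
              = LinearMap.det a.toLinearMap := by
            have h1 : ((a⁻¹ * a : (ι → ℝ) ≃ₗ[ℝ] (ι → ℝ))).toLinearMap = LinearMap.id := by
              rw [inv_mul_cancel]; rfl
            have h2 : LinearMap.det (a⁻¹ : (ι → ℝ) ≃ₗ[ℝ] (ι → ℝ)).toLinearMap *
                LinearMap.det a.toLinearMap = 1 := by
              rw [← map_mul, ← show ((a⁻¹ * a : (ι → ℝ) ≃ₗ[ℝ] (ι → ℝ))).toLinearMap
                = (a⁻¹ : (ι → ℝ) ≃ₗ[ℝ] (ι → ℝ)).toLinearMap * a.toLinearMap from rfl,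
                h1, LinearMap.det_id]
            have h3 := hA.2
            calc LinearMap.det (a⁻¹ : (ι → ℝ) ≃ₗ[ℝ] (ι → ℝ)).toLinearMap
                = LinearMap.det (a⁻¹ : (ι → ℝ) ≃ₗ[ℝ] (ι → ℝ)).toLinearMap *
                  (LinearMap.det a.toLinearMap * LinearMap.det a.toLinearMap) := by
                  rw [h3, mul_one]
              _ = (LinearMap.det (a⁻¹ : (ι → ℝ) ≃ₗ[ℝ] (ι → ℝ)).toLinearMap *
                  LinearMap.det a.toLinearMap) * LinearMap.det a.toLinearMap := by ring
              _ = LinearMap.det a.toLinearMap := by rw [h2, one_mul]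
          constructor
          · have h3 : polyAct a⁻¹ (polyAct a J) = polyAct a⁻¹ ((LinearMap.det a.toLinearMap) • J) := by
              rw [hA.1]
            rw [← polyAct_mul, inv_mul_cancel, polyAct_one, map_smul] at h3
            have h4 := congrArg (fun p => (LinearMap.det a.toLinearMap) • p) h3
            simp only [smul_smul, hA.2, one_smul] at h4
            rw [hdetinv]
            exact h4.symm
          · rw [hdetinv]; exact hA.2
    exact fun w hw => (main w hw).1
  have hJmem : J ∈ signSpace W N :=
    mem_signSpace.mpr ⟨hJhom, fun w hw => hJsign w hw⟩
  constructor
  · have hspan2 : signSpace W N = Submodule.span ℝ {J} := by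
      apply le_antisymm
      · intro p hp
        obtain ⟨c, hc⟩ := eq_smul_of_dvd_homog_eq hJhom hJ0 (mem_signSpace.mp hp).1
          (hdiv N p hp)
        exact Submodule.mem_span_singleton.mpr ⟨c, hc.symm⟩
      · rw [Submodule.span_singleton_le_iff_mem]
        exact hJmem
    rw [hspan2]
    exact finrank_span_singleton hJ0
  · intro j hj
    have hbot : signSpace W j = ⊥ := by
      rw [Submodule.eq_bot_iff]
      intro p hp
      exact eq_zero_of_dvd_homog_lt hJhom hJ0 (mem_signSpace.mp hp).1 hj (hdiv j p hp)
    rw [hbot]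
    exact finrank_bot ℝ _


end Stmt4
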